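/- Let G be a finite group acting on a finite nonempty type ι, acting on R = ℤ[xᵢ : i ∈ ι] by ring automorphisms permuting the variables, and let J ⊆ R be a G-stable ideal. Then the cokernel of the restriction R^G → (R/J)^G of the quotient map to invariant subrings is isomorphic, as an abelian group, to the first group cohomology H¹(G, J), where J is regarded as a G-module via the restricted action. -/

import Mathlib

set_option synthInstance.maxHeartbeats 1000000
set_option maxHeartbeats 1000000

open MvPolynomial

/-- The subring of `G`-invariant elements of a ring `R` on which `G` acts by
ring automorphisms. -/
def fixedSubring (G R : Type) [Monoid G] [Ring R] [MulSemiringAction G R] :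
    Subring R where
  carrier := {r | ∀ g : G, g • r = r}
  zero_mem' := fun g => smul_zero g
  one_mem' := fun g => smul_one g
  add_mem' := fun {a b} ha hb g => by rw [smul_add, ha g, hb g]
  mul_mem' := fun {a b} ha hb g => by rw [smul_mul', ha g, hb g]
  neg_mem' := fun {a} ha g => by rw [smul_neg, ha g]

lemma mem_fixedSubring {G R : Type} [Monoid G] [Ring R] [MulSemiringAction G R]
    {r : R} : r ∈ fixedSubring G R ↔ ∀ g : G, g • r = r := Iff.rfl

/-- The restriction, to invariant subrings, of the quotient map `R → R ⧸ J` by a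
`G`-stable ideal `J` (the action on the quotient being the induced one). -/
def resHom (G R : Type) [Group G] [CommRing R] [MulSemiringAction G R] (J : Ideal R)
    [MulSemiringAction G (R ⧸ J)]
    (hq : ∀ (g : G) (r : R),
      g • (Ideal.Quotient.mk J r) = Ideal.Quotient.mk J (g • r)) :
    fixedSubring G R →+* fixedSubring G (R ⧸ J) where
  toFun p := ⟨Ideal.Quotient.mk J (p : R), fun g => by
    rw [hq]
    exact congrArg (Ideal.Quotient.mk J) (mem_fixedSubring.mp p.2 g)⟩
  map_one' := Subtype.ext (map_one (Ideal.Quotient.mk J))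
  map_mul' x y := Subtype.ext (map_mul (Ideal.Quotient.mk J) _ _)
  map_zero' := Subtype.ext (map_zero (Ideal.Quotient.mk J))
  map_add' x y := Subtype.ext (map_add (Ideal.Quotient.mk J) _ _)

/-- The action of `G` on a `G`-stable ideal `J` of `R`, restricted from the action
on `R`. -/
def idealAction (G : Type) {R : Type} [Group G] [CommRing R] [MulSemiringAction G R]
    (J : Ideal R) (hJ : ∀ (g : G), ∀ x ∈ J, g • x ∈ J) :
    DistribMulAction G J where
  smul g x := ⟨g • (x : R), hJ g x x.2⟩
  one_smul x := Subtype.ext (one_smul G (x : R))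
  mul_smul g h x := Subtype.ext (mul_smul g h (x : R))
  smul_zero g := Subtype.ext (smul_zero g)
  smul_add g x y := Subtype.ext (smul_add g (x : R) (y : R))

/-- A `G`-stable ideal `J` of `R`, regarded as a `ℤ`-linear `G`-representation via the
restricted action. -/
noncomputable def idealRep (G : Type) {R : Type} [Group G] [CommRing R]
    [MulSemiringAction G R] (J : Ideal R)
    (hJ : ∀ (g : G), ∀ x ∈ J, g • x ∈ J) : Rep ℤ G :=
  letI : DistribMulAction G J := idealAction G J hJ
  Rep.ofDistribMulAction ℤ G J


-- combinatorial key lemma: vanishing of H^1 of a permutation module, coefficientwise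
lemma keyA {G D : Type} [Group G] [Finite G] (act : G → D → D)
    (hone : ∀ m, act 1 m = m) (hmul : ∀ g h m, act (g * h) m = act g (act h m))
    (ψ : G → D → ℤ)
    (hco : ∀ g h m, ψ (g * h) m = ψ h (act g⁻¹ m) + ψ g m) :
    ∃ ρ : D → ℤ, (∀ m, (∀ g, ψ g m = 0) → ρ m = 0) ∧
      ∀ g m, ψ g m = ρ (act g⁻¹ m) - ρ m := by
  have hinv : ∀ g m, act g⁻¹ (act g m) = m := fun g m => by
    rw [← hmul, inv_mul_cancel, hone]
  have hinv' : ∀ g m, act g (act g⁻¹ m) = m := fun g m => by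
    rw [← hmul, mul_inv_cancel, hone]
  have hψ1 : ∀ m, ψ 1 m = 0 := by
    intro m
    have := hco 1 1 m
    simp [hone, inv_one] at this
    linarith
  -- stabilizer vanishing
  have hstab : ∀ g m, act g m = m → ψ g m = 0 := by
    intro g m hm
    have hinvfix : act g⁻¹ m = m := by conv_lhs => rw [← hm, hinv]
    have hpow : ∀ n : ℕ, ψ (g ^ n) m = n * ψ g m := by
      intro n
      induction n with
      | zero => simpa using hψ1 m
      | succ n ih =>
        have := hco g (g ^ n) m
        rw [← pow_succ'] at this
        rw [this, hinvfix, ih]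
        push_cast; ring
    have hfin : g ^ (orderOf g) = 1 := pow_orderOf_eq_one g
    have := hpow (orderOf g)
    rw [hfin, hψ1] at this
    have hpos : 0 < orderOf g := by
      have : IsOfFinOrder g := isOfFinOrder_of_finite g
      exact this.orderOf_pos
    have : (orderOf g : ℤ) * ψ g m = 0 := this.symm
    rcases mul_eq_zero.1 this with h | h
    · exact absurd h (by positivity)
    · exact h
  -- orbit setoid
  letI s : Setoid D := ⟨fun a b => ∃ g, act g b = a, by
    constructor
    · exact fun a => ⟨1, hone a⟩
    · rintro a b ⟨g, rfl⟩; exact ⟨g⁻¹, hinv g b⟩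
    · rintro a b c ⟨g, rfl⟩ ⟨h, rfl⟩; exact ⟨g * h, hmul g h c⟩⟩
  let rep : D → D := fun m => (Quotient.mk s m).out
  have hrep : ∀ m, ∃ g, act g (rep m) = m := by
    intro m
    have : (Quotient.mk s m).out ≈ m := Quotient.exact ((Quotient.mk s m).out_eq)
    obtain ⟨g, hg⟩ := this
    refine ⟨g⁻¹, ?_⟩
    simp only [rep]
    rw [← hg, hinv]
  have hrep_eq : ∀ g m, rep (act g⁻¹ m) = rep m := by
    intro g m
    have : (Quotient.mk s (act g⁻¹ m)) = Quotient.mk s m :=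
      Quotient.sound ⟨g⁻¹, rfl⟩
    simp only [rep, this]
  let σ : D → G := fun m => (hrep m).choose
  have hσ : ∀ m, act (σ m) (rep m) = m := fun m => (hrep m).choose_spec
  refine ⟨fun m => -ψ (σ m) m, ?_, ?_⟩
  · intro m h; simp [h]
  · intro g m
    set m' := act g⁻¹ m with hm'
    set m₀ := rep m with hm₀
    have hm₀' : rep m' = m₀ := hrep_eq g m
    set a := σ m
    set b := σ m'
    have ha : act a m₀ = m := hσ m
    have hb : act b m₀ = m' := by rw [← hm₀']; exact hσ m'
    -- u := a⁻¹ * g * b fixes m₀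
    have hfix : act (a⁻¹ * (g * b)) m₀ = m₀ := by
      rw [hmul, hmul, hb, hinv', ← ha, hinv]
    have haa : act a⁻¹ m = m₀ := by rw [← ha, hinv]
    have e1 : ψ (g * b) m = ψ b m' + ψ g m := hco g b m
    have e2 : ψ (g * b) m = ψ (a⁻¹ * (g * b)) m₀ + ψ a m := by
      have h := hco a (a⁻¹ * (g * b)) m
      rw [haa, mul_inv_cancel_left] at h
      exact h
    have e3 : ψ (a⁻¹ * (g * b)) m₀ = 0 := hstab _ _ hfix
    show ψ g m = -ψ (σ m') m' - -ψ (σ m) m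
    linarith

open MvPolynomial

lemma smul_eq_rename {G ι : Type} [Group G] [MulAction G ι]
    [MulSemiringAction G (MvPolynomial ι ℤ)]
    (hX : ∀ (g : G) (i : ι), g • (X i : MvPolynomial ι ℤ) = X (g • i))
    (g : G) (p : MvPolynomial ι ℤ) :
    g • p = rename (fun i => g • i) p := by
  have : (MulSemiringAction.toRingHom G (MvPolynomial ι ℤ) g) =
      (rename (fun i : ι => g • i)).toRingHom := by
    apply MvPolynomial.ringHom_ext
    · intro a
      show g • (C a : MvPolynomial ι ℤ) = rename (fun i => g • i) (C a)
      rw [rename_C, eq_intCast (C : ℤ →+* MvPolynomial ι ℤ) a]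
      exact map_intCast (MulSemiringAction.toRingHom G (MvPolynomial ι ℤ) g) a
    · intro i
      show g • (X i : MvPolynomial ι ℤ) = rename (fun i => g • i) (X i)
      rw [rename_X]
      exact hX g i
  exact RingHom.congr_fun this p

lemma H1R {G ι : Type} [Group G] [Finite G] [MulAction G ι]
    [MulSemiringAction G (MvPolynomial ι ℤ)]
    (hX : ∀ (g : G) (i : ι), g • (X i : MvPolynomial ι ℤ) = X (g • i))
    (F : G → MvPolynomial ι ℤ) (hF : ∀ g h, F (g * h) = g • F h + F g) :
    ∃ r : MvPolynomial ι ℤ, ∀ g, F g = g • r - r := by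
  classical
  have := Fintype.ofFinite G
  set act : G → (ι →₀ ℕ) → (ι →₀ ℕ) :=
    fun g m => Finsupp.mapDomain (fun i => g • i) m with hact
  have hone : ∀ m, act 1 m = m := by
    intro m
    simp only [hact, one_smul]
    exact Finsupp.mapDomain_id
  have hmul : ∀ g h m, act (g * h) m = act g (act h m) := by
    intro g h m
    simp only [hact]
    rw [← Finsupp.mapDomain_comp]
    congr 1
    funext i
    simp [mul_smul]
  have hcoeff : ∀ (g : G) (p : MvPolynomial ι ℤ) (m : ι →₀ ℕ),
      coeff (act g m) (g • p) = coeff m p := by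
    intro g p m
    rw [smul_eq_rename hX]
    exact coeff_rename_mapDomain _ (MulAction.injective g) p m
  have hcoeff' : ∀ (g : G) (p : MvPolynomial ι ℤ) (m : ι →₀ ℕ),
      coeff m (g • p) = coeff (act g⁻¹ m) p := by
    intro g p m
    have h1 : act g (act g⁻¹ m) = m := by rw [← hmul, mul_inv_cancel, hone]
    conv_lhs => rw [← h1]
    exact hcoeff g p (act g⁻¹ m)
  set ψ : G → (ι →₀ ℕ) → ℤ := fun g m => coeff m (F g) with hψ
  obtain ⟨ρ, hρ0, hρ⟩ := keyA act hone hmul ψ (by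
    intro g h m
    simp only [hψ, hF g h, coeff_add, hcoeff'])
  set S : Finset (ι →₀ ℕ) := Finset.univ.biUnion (fun g => (F g).support) with hS
  refine ⟨∑ m ∈ S, monomial m (ρ m), fun g => ?_⟩
  have hcr : ∀ m, coeff m (∑ m' ∈ S, monomial m' (ρ m')) = ρ m := by
    intro m
    rw [coeff_sum]
    simp only [coeff_monomial]
    rw [Finset.sum_ite_eq' S m ρ]
    split_ifs with h
    · rfl
    · refine (hρ0 m ?_).symm
      intro g'
      have : m ∉ (F g').support := fun hm => h (Finset.mem_biUnion.2 ⟨g', Finset.mem_univ _, hm⟩)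
      simpa [hψ, MvPolynomial.notMem_support_iff] using this
  ext m
  rw [coeff_sub, hcoeff', hcr, hcr]
  exact hρ g m


/-- Let `G` be a finite group acting on a finite nonempty type `ι`, acting
on `R = ℤ[xᵢ : i ∈ ι]` by ring automorphisms permuting the variables, and let `J ⊆ R` be
a `G`-stable ideal.  Then the cokernel of the restriction `R^G → (R/J)^G` of the
quotient map to invariant subrings is isomorphic, as an abelian group, to the first
group cohomology `H¹(G, J)` of `J` regarded as a `G`-module via the restricted action. -/
theorem stmt3 (G ι : Type) [Group G] [Finite G] [Finite ι] [Nonempty ι]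
    [MulAction G ι] [MulSemiringAction G (MvPolynomial ι ℤ)]
    (hX : ∀ (g : G) (i : ι), g • (X i : MvPolynomial ι ℤ) = X (g • i))
    (J : Ideal (MvPolynomial ι ℤ))
    (hJ : ∀ (g : G), ∀ x ∈ J, g • x ∈ J)
    [MulSemiringAction G (MvPolynomial ι ℤ ⧸ J)]
    (hq : ∀ (g : G) (r : MvPolynomial ι ℤ),
      g • (Ideal.Quotient.mk J r) = Ideal.Quotient.mk J (g • r)) :
    Nonempty
      ((fixedSubring G (MvPolynomial ι ℤ ⧸ J) ⧸
          (resHom G (MvPolynomial ι ℤ) J hq).toAddMonoidHom.range) ≃+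
        groupCohomology.H1 (idealRep G J hJ)) := by
  classical
  letI : DistribMulAction G (↥J) := idealAction G J hJ
  set R := MvPolynomial ι ℤ with hR
  set A : Rep ℤ G := idealRep G J hJ with hA
  set mk : R →+* R ⧸ J := Ideal.Quotient.mk J with hmk
  open groupCohomology in
  -- basic facts
  have hmemJ : ∀ (r : R), (∀ g : G, g • mk r = mk r) → ∀ g : G, g • r - r ∈ J := by
    intro r hr g
    rw [← Ideal.Quotient.eq_zero_iff_mem]
    show mk (g • r - r) = 0
    rw [map_sub, ← hq, hr g, sub_self]
  -- the cocycle attached to a lift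
  have cocmem : ∀ (r : R) (hr : ∀ g : G, g • r - r ∈ J),
      (fun g => (⟨g • r - r, hr g⟩ : ↥J)) ∈ groupCohomology.cocycles₁ A := by
    intro r hr
    refine (groupCohomology.mem_cocycles₁_iff (A := A) _).2 ?_
    intro g h
    apply Subtype.ext
    show (g * h) • r - r = g • (h • r - r) + (g • r - r)
    rw [smul_sub, mul_smul]
    ring
  set coc : ∀ (r : R), (∀ g : G, g • r - r ∈ J) → groupCohomology.cocycles₁ A :=
    fun r hr => ⟨fun g => (⟨g • r - r, hr g⟩ : ↥J), cocmem r hr⟩ with hcoc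
  have cls_eq : ∀ (r r' : R) (hr : ∀ g : G, g • r - r ∈ J) (hr' : ∀ g : G, g • r' - r' ∈ J),
      r - r' ∈ J →
      groupCohomology.H1π A (coc r hr) = groupCohomology.H1π A (coc r' hr') := by
    intro r r' hr hr' hd
    have hmem : ⇑(coc r hr) - ⇑(coc r' hr') ∈ groupCohomology.coboundaries₁ A := by
      refine ⟨(⟨r - r', hd⟩ : ↥J), funext fun g => ?_⟩
      apply Subtype.ext
      show g • (r - r') - (r - r') = (g • r - r) - (g • r' - r')
      rw [smul_sub]
      ring
    exact (groupCohomology.H1π_eq_iff _ _).2 hmem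
  -- the lift
  set l : (fixedSubring G (R ⧸ J)) → R :=
    fun y => (Ideal.Quotient.mk_surjective (y : R ⧸ J)).choose with hldef
  have hl : ∀ y, mk (l y) = (y : R ⧸ J) :=
    fun y => (Ideal.Quotient.mk_surjective (y : R ⧸ J)).choose_spec
  have hlJ : ∀ y (g : G), g • l y - l y ∈ J := by
    intro y g
    refine hmemJ _ (fun g' => ?_) g
    rw [hl]
    exact y.2 g'
  -- the connecting homomorphism
  set φ : (fixedSubring G (R ⧸ J)) →+ groupCohomology.H1 A :=
    AddMonoidHom.mk' (fun y => groupCohomology.H1π A (coc (l y) (hlJ y))) (by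
      intro y z
      have hyz : ∀ g : G, g • (l y + l z) - (l y + l z) ∈ J := by
        intro g
        have h2 : g • (l y + l z) - (l y + l z) = (g • l y - l y) + (g • l z - l z) := by
          rw [smul_add]; ring
        rw [h2]
        exact J.add_mem (hlJ y g) (hlJ z g)
      have e1 : groupCohomology.H1π A (coc (l (y + z)) (hlJ (y + z))) =
          groupCohomology.H1π A (coc (l y + l z) hyz) := by
        refine cls_eq _ _ _ _ ?_
        rw [← Ideal.Quotient.eq_zero_iff_mem]
        show mk (l (y + z) - (l y + l z)) = 0
        rw [map_sub, map_add, hl, hl, hl]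
        push_cast
        ring
      have e2 : coc (l y + l z) hyz = coc (l y) (hlJ y) + coc (l z) (hlJ z) := by
        apply Subtype.ext
        funext g
        apply Subtype.ext
        show g • (l y + l z) - (l y + l z) = (g • l y - l y) + (g • l z - l z)
        rw [smul_add]; ring
      show groupCohomology.H1π A (coc (l (y + z)) (hlJ (y + z))) =
        groupCohomology.H1π A (coc (l y) (hlJ y)) + groupCohomology.H1π A (coc (l z) (hlJ z))
      rw [e1, e2, map_add]) with hφ
  have hφ_apply : ∀ y, φ y = groupCohomology.H1π A (coc (l y) (hlJ y)) := fun y => rfl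
  -- surjectivity
  have hsurj : Function.Surjective φ := by
    intro v
    obtain ⟨f, hf⟩ : ∃ f, groupCohomology.H1π A f = v :=
      groupCohomology.H1_induction_on v (fun f => ⟨f, rfl⟩)
    set F : G → R := fun g => ((f : G → A) g).val with hFdef
    have hFco : ∀ g h : G, F (g * h) = g • F h + F g := by
      intro g h
      have h1 := (groupCohomology.mem_cocycles₁_iff ((f : G → A))).1 f.2 g h
      have h2 := congrArg Subtype.val h1
      exact h2.trans rfl
    obtain ⟨r, hrF⟩ := H1R hX F hFco
    have hrJ : ∀ g : G, g • r - r ∈ J := by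
      intro g
      rw [← hrF g]
      exact ((f : G → A) g).2
    have hinv : ∀ g : G, g • mk r = mk r := by
      intro g
      rw [hq]
      refine (Ideal.Quotient.eq (I := J)).2 ?_
      rw [← hrF g]
      exact ((f : G → A) g).2
    refine ⟨⟨mk r, hinv⟩, ?_⟩
    rw [hφ_apply]
    have e1 : groupCohomology.H1π A (coc (l ⟨mk r, hinv⟩) (hlJ ⟨mk r, hinv⟩)) =
        groupCohomology.H1π A (coc r hrJ) := by
      refine cls_eq _ _ _ _ ?_
      refine (Ideal.Quotient.eq (I := J)).1 ?_
      show mk (l ⟨mk r, hinv⟩) = mk r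
      rw [hl]
    have e3 : coc r hrJ = f := by
      apply Subtype.ext
      funext g
      apply Subtype.ext
      exact (hrF g).symm
    rw [e1, e3]
    exact hf
  -- kernel computation
  have hker : φ.ker = (resHom G R J hq).toAddMonoidHom.range := by
    ext y
    constructor
    · intro hy
      have h0 : groupCohomology.H1π A (coc (l y) (hlJ y)) = 0 :=
        (hφ_apply y) ▸ AddMonoidHom.mem_ker.1 hy
      have hb : ⇑(coc (l y) (hlJ y)) ∈ groupCohomology.coboundaries₁ A :=
        (groupCohomology.H1π_eq_zero_iff _).1 h0
      obtain ⟨x, hx⟩ := hb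
      have hx' : ∀ g : G, g • (x : ↥J).val - (x : ↥J).val = g • l y - l y := by
        intro g
        have h2 := congrArg Subtype.val (congrFun hx g)
        exact (rfl.trans h2 : _)
      set r : R := l y - (x : ↥J).val with hrdef
      have hrinv : ∀ g : G, g • r = r := by
        intro g
        have h4 : g • r - r = (g • l y - l y) - (g • (x : ↥J).val - (x : ↥J).val) := by
          rw [hrdef, smul_sub]; ring
        have h5 : g • r - r = 0 := by rw [h4, hx' g, sub_self]
        exact sub_eq_zero.1 h5
      refine ⟨⟨r, hrinv⟩, ?_⟩
      apply Subtype.ext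
      show mk r = (y : R ⧸ J)
      rw [hrdef, map_sub, hl, Ideal.Quotient.eq_zero_iff_mem.2 (x : ↥J).2, sub_zero]
    · rintro ⟨p, rfl⟩
      refine AddMonoidHom.mem_ker.2 ?_
      rw [hφ_apply]
      have hp : ∀ g : G, g • (p : R) - (p : R) ∈ J := by
        intro g
        rw [p.2 g, sub_self]
        exact J.zero_mem
      set y := (resHom G R J hq).toAddMonoidHom p with hydef
      have e1 : groupCohomology.H1π A (coc (l y) (hlJ y)) =
          groupCohomology.H1π A (coc (p : R) hp) := by
        refine cls_eq _ _ _ _ ?_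
        refine (Ideal.Quotient.eq (I := J)).1 ?_
        rw [hl]
        rfl
      rw [e1]
      have e2 : coc (p : R) hp = 0 := by
        apply Subtype.ext
        funext g
        apply Subtype.ext
        show g • (p : R) - (p : R) = 0
        rw [p.2 g, sub_self]
      rw [e2, map_zero]
  exact ⟨(QuotientAddGroup.quotientAddEquivOfEq hker.symm).trans
    (QuotientAddGroup.quotientKerEquivOfSurjective φ hsurj)⟩
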